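/- Fix P₀ > 0 and P_c > 0. Then the function P_LO ↦ ln P₁(P_LO) has, at every P_LO > 0, derivative equal to −(X₀·a₃₄/X₁²)·(2a₁₂²P₀² + 2a₁₂P₀a₂₃P_c), which is strictly negative; consequently P_LO ↦ P₁(P_LO) is strictly decreasing on (0, ∞). -/

import Mathlib

open Set

/-- `X₁ = 2a₁₂²P₀² + 2a₁₂P₀(a₃₄P_LO + a₂₃P_c) + γ₂²a₃₄P_LO`. -/
noncomputable def X1fun (a12 a23 a34 γ2 P0 Pc PLO : ℝ) : ℝ :=
  2 * a12 ^ 2 * P0 ^ 2 + 2 * a12 * P0 * (a34 * PLO + a23 * Pc) + γ2 ^ 2 * a34 * PLO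

/-- Transmitted probe power `P₁ = P₀·exp(−X₀a₃₄P_LO/X₁)` at zero detuning. -/
noncomputable def P1fun (a12 a23 a34 γ2 X0 P0 Pc PLO : ℝ) : ℝ :=
  P0 * Real.exp (-(X0 * a34 * PLO) / X1fun a12 a23 a34 γ2 P0 Pc PLO)

theorem logP1_deriv_in_PLO_neg_and_P1_strictAnti
    (a12 a23 a34 γ2 X0 C0 : ℝ)
    (ha12 : 0 < a12) (ha23 : 0 < a23) (ha34 : 0 < a34) (hγ2 : 0 < γ2)
    (hX0 : 0 < X0) (hC0 : 0 < C0)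
    (P0 Pc : ℝ) (hP0 : 0 < P0) (hPc : 0 < Pc) :
    (∀ PLO : ℝ, 0 < PLO →
      HasDerivAt (fun p => Real.log (P1fun a12 a23 a34 γ2 X0 P0 Pc p))
        (-(X0 * a34 / (X1fun a12 a23 a34 γ2 P0 Pc PLO) ^ 2)
          * (2 * a12 ^ 2 * P0 ^ 2 + 2 * a12 * P0 * a23 * Pc)) PLO ∧
      -(X0 * a34 / (X1fun a12 a23 a34 γ2 P0 Pc PLO) ^ 2)
          * (2 * a12 ^ 2 * P0 ^ 2 + 2 * a12 * P0 * a23 * Pc) < 0) ∧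
    StrictAntiOn (fun PLO => P1fun a12 a23 a34 γ2 X0 P0 Pc PLO) (Ioi 0) := by
  set A : ℝ := 2 * a12 ^ 2 * P0 ^ 2 + 2 * a12 * P0 * a23 * Pc with hA
  set B : ℝ := 2 * a12 * P0 * a34 + γ2 ^ 2 * a34 with hB
  have hApos : 0 < A := by positivity
  have hBpos : 0 < B := by positivity
  have hX1eq : ∀ p : ℝ, X1fun a12 a23 a34 γ2 P0 Pc p = A + B * p := by
    intro p; simp only [X1fun, hA, hB]; ring
  have hX1pos : ∀ p : ℝ, 0 < p → 0 < X1fun a12 a23 a34 γ2 P0 Pc p := by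
    intro p hp; rw [hX1eq]; positivity
  -- derivative of the exponent f p = -(X0*a34*p)/X1 p
  have hf : ∀ p : ℝ, 0 < p →
      HasDerivAt (fun q => -(X0 * a34 * q) / X1fun a12 a23 a34 γ2 P0 Pc q)
        (-(X0 * a34 / (X1fun a12 a23 a34 γ2 P0 Pc p) ^ 2) * A) p := by
    intro p hp
    have hu : HasDerivAt (fun q : ℝ => -(X0 * a34 * q)) (-(X0 * a34)) p := by
      simpa using ((hasDerivAt_id p).const_mul (-(X0 * a34)))
    have hv : HasDerivAt (fun q : ℝ => X1fun a12 a23 a34 γ2 P0 Pc q) B p := by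
      have h : HasDerivAt (fun q : ℝ => A + B * q) B p := by
        simpa using ((hasDerivAt_id p).const_mul B).const_add A
      exact h.congr_of_eventuallyEq (Filter.Eventually.of_forall hX1eq)
    have hvne : X1fun a12 a23 a34 γ2 P0 Pc p ≠ 0 := (hX1pos p hp).ne'
    have := hu.div hv hvne
    refine this.congr_deriv ?_
    rw [hX1eq p]
    have hne : A + B * p ≠ 0 := by positivity
    field_simp
    ring
  have hlog : ∀ p : ℝ, 0 < p →
      HasDerivAt (fun q => Real.log (P1fun a12 a23 a34 γ2 X0 P0 Pc q))
        (-(X0 * a34 / (X1fun a12 a23 a34 γ2 P0 Pc p) ^ 2) * A) p := by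
    intro p hp
    have heq : (fun q => Real.log (P1fun a12 a23 a34 γ2 X0 P0 Pc q))
        = fun q => Real.log P0 + -(X0 * a34 * q) / X1fun a12 a23 a34 γ2 P0 Pc q := by
      funext q
      simp [P1fun, Real.log_mul hP0.ne' (Real.exp_ne_zero _), Real.log_exp]
    rw [heq]
    exact (hf p hp).const_add (Real.log P0)
  have hderivneg : ∀ p : ℝ, 0 < p →
      -(X0 * a34 / (X1fun a12 a23 a34 γ2 P0 Pc p) ^ 2) * A < 0 := by
    intro p hp
    have h1 : 0 < X0 * a34 / (X1fun a12 a23 a34 γ2 P0 Pc p) ^ 2 :=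
      div_pos (by positivity) (pow_pos (hX1pos p hp) 2)
    nlinarith
  refine ⟨fun PLO hPLO => ⟨hlog PLO hPLO, hderivneg PLO hPLO⟩, ?_⟩
  -- P1 has derivative P0 * (exp (f p) * f' p) which is negative
  have hP1deriv : ∀ p : ℝ, 0 < p →
      HasDerivAt (fun q => P1fun a12 a23 a34 γ2 X0 P0 Pc q)
        (P0 * (Real.exp (-(X0 * a34 * p) / X1fun a12 a23 a34 γ2 P0 Pc p) *
          (-(X0 * a34 / (X1fun a12 a23 a34 γ2 P0 Pc p) ^ 2) * A))) p := by
    intro p hp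
    exact ((hf p hp).exp).const_mul P0
  apply strictAntiOn_of_deriv_neg (convex_Ioi 0)
  · intro p hp
    exact ((hP1deriv p hp).differentiableAt.continuousAt).continuousWithinAt
  · intro p hp
    rw [interior_Ioi] at hp
    rw [(hP1deriv p hp).deriv]
    have := hderivneg p hp
    have hexp : 0 < Real.exp (-(X0 * a34 * p) / X1fun a12 a23 a34 γ2 P0 Pc p) :=
      Real.exp_pos _
    exact mul_neg_of_pos_of_neg hP0 (mul_neg_of_pos_of_neg hexp this)
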